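/- The variance of the adherence-aware Q-learning noise term is bounded quadratically in the error: suppose |R x u| ≤ C_R for all x ∈ X, u ∈ U, let Q* : X × U → ℝ be the fixed point of J, let q : X × U → ℝ, and fix x ∈ X, u ∈ U, θ' ∈ [0,1]. Define f : X → ℝ by f(x') = θ' · max_{u_r ∈ U} (R x u_r + λ · q(x', u_r)) + (1−θ') · (R x (g_b x) + λ · q(x', g_b x)) − Q*(x,u). Then for every probability mass function p on X (p x' ≥ 0, ∑_{x'} p x' = 1), the variance ∑_{x'} p x' · f(x')² − (∑_{x'} p x' · f(x'))² is at most C · (1 + ‖q − Q*‖∞)², where C = (C_R + (1+λ) · ‖Q*‖∞ + λ)². -/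

import Mathlib

open Finset

/-- The adherence-aware Bellman operator `J`:
`(J q)(x,u) = θ · max_{u_r} ∑_{x'} P x u_r x' · (R x u_r + λ · q (x', u_r))
  + (1−θ) · ∑_{x'} P x (g_b x) x' · (R x (g_b x) + λ · q (x', g_b x))`. -/
noncomputable def adhJ {X U : Type*} [Fintype X] [Fintype U] [Nonempty U]
    (P : X → U → X → ℝ) (R : X → U → ℝ) (lam θ : ℝ) (gb : X → U)
    (q : X × U → ℝ) : X × U → ℝ :=
  fun p =>
    θ * (Finset.univ.sup' Finset.univ_nonempty fun ur : U =>
        ∑ x' : X, P p.1 ur x' * (R p.1 ur + lam * q (x', ur)))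
    + (1 - θ) * ∑ x' : X, P p.1 (gb p.1) x' * (R p.1 (gb p.1) + lam * q (x', gb p.1))

/-- the variance of the adherence-aware Q-learning noise term is bounded
quadratically in the error `‖q − Q*‖∞`. -/
theorem adhJ_noise_variance_bound {X U : Type*}
    [Fintype X] [Nonempty X] [Fintype U] [Nonempty U]
    (P : X → U → X → ℝ) (R : X → U → ℝ) (lam θ : ℝ) (gb : X → U)
    (hP0 : ∀ x u x', 0 ≤ P x u x') (hP1 : ∀ x u, ∑ x' : X, P x u x' = 1)
    (hlam : lam ∈ Set.Ioo (0 : ℝ) 1) (hθ : θ ∈ Set.Icc (0 : ℝ) 1)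
    (C_R : ℝ) (hR : ∀ x u, |R x u| ≤ C_R)
    (Qstar : X × U → ℝ) (hfix : adhJ P R lam θ gb Qstar = Qstar)
    (q : X × U → ℝ) (x : X) (u : U) (θ' : ℝ) (hθ' : θ' ∈ Set.Icc (0 : ℝ) 1)
    (f : X → ℝ)
    (hf : ∀ x' : X, f x' =
      θ' * (Finset.univ.sup' Finset.univ_nonempty fun ur : U => R x ur + lam * q (x', ur))
        + (1 - θ') * (R x (gb x) + lam * q (x', gb x)) - Qstar (x, u))
    (p : X → ℝ) (hp0 : ∀ x', 0 ≤ p x') (hp1 : ∑ x' : X, p x' = 1) :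
    (∑ x' : X, p x' * (f x') ^ 2) - (∑ x' : X, p x' * f x') ^ 2 ≤
      (C_R + (1 + lam) * ‖Qstar‖ + lam) ^ 2 * (1 + ‖q - Qstar‖) ^ 2 := by

  obtain ⟨hl0, hl1⟩ := hlam
  obtain ⟨ht0, ht1⟩ := hθ'
  set D := ‖q - Qstar‖ with hD
  have hD0 : 0 ≤ D := norm_nonneg _
  have hQ0 : 0 ≤ ‖Qstar‖ := norm_nonneg _
  have hCR0 : 0 ≤ C_R := le_trans (abs_nonneg _) (hR x u)
  -- pointwise bounds on q
  have hq : ∀ z : X × U, |q z| ≤ D + ‖Qstar‖ := by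
    intro z
    have h1 : |q z - Qstar z| ≤ D := by
      calc |q z - Qstar z| = ‖(q - Qstar) z‖ := rfl
        _ ≤ D := norm_le_pi_norm (q - Qstar) z
    have h2 : |Qstar z| ≤ ‖Qstar‖ := norm_le_pi_norm Qstar z
    calc |q z| = |(q z - Qstar z) + Qstar z| := by ring_nf
      _ ≤ |q z - Qstar z| + |Qstar z| := abs_add_le _ _
      _ ≤ D + ‖Qstar‖ := add_le_add h1 h2
  set B := C_R + lam * (D + ‖Qstar‖) with hB
  set M := B + ‖Qstar‖ with hM
  have hterm : ∀ (x' : X) (ur : U), |R x ur + lam * q (x', ur)| ≤ B := by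
    intro x' ur
    calc |R x ur + lam * q (x', ur)| ≤ |R x ur| + |lam * q (x', ur)| := abs_add_le _ _
      _ = |R x ur| + lam * |q (x', ur)| := by rw [abs_mul, abs_of_pos hl0]
      _ ≤ C_R + lam * (D + ‖Qstar‖) :=
          add_le_add (hR x ur) (mul_le_mul_of_nonneg_left (hq _) hl0.le)
  have hB0 : 0 ≤ B := by positivity
  -- sup' bound
  have hsup : ∀ x' : X,
      |Finset.univ.sup' Finset.univ_nonempty (fun ur : U => R x ur + lam * q (x', ur))| ≤ B := by
    intro x'
    rw [abs_le]
    constructor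
    · have := Finset.le_sup' (fun ur : U => R x ur + lam * q (x', ur))
        (Finset.mem_univ (Classical.arbitrary U))
      have h2 := (abs_le.mp (hterm x' (Classical.arbitrary U))).1
      linarith
    · exact Finset.sup'_le _ _ (fun ur _ => (abs_le.mp (hterm x' ur)).2)
  have hfbound : ∀ x' : X, |f x'| ≤ M := by
    intro x'
    rw [hf x']
    have h1 := hsup x'
    have h2 := hterm x' (gb x)
    have h3 : |Qstar (x, u)| ≤ ‖Qstar‖ := norm_le_pi_norm Qstar (x, u)
    calc |θ' * (Finset.univ.sup' Finset.univ_nonempty fun ur : U => R x ur + lam * q (x', ur))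
          + (1 - θ') * (R x (gb x) + lam * q (x', gb x)) - Qstar (x, u)|
        ≤ |θ' * (Finset.univ.sup' Finset.univ_nonempty fun ur : U => R x ur + lam * q (x', ur))
          + (1 - θ') * (R x (gb x) + lam * q (x', gb x))| + |Qstar (x, u)| := abs_sub _ _
      _ ≤ (|θ' * _| + |(1 - θ') * (R x (gb x) + lam * q (x', gb x))|) + |Qstar (x, u)| :=
          add_le_add (abs_add_le _ _) le_rfl
      _ ≤ (θ' * B + (1 - θ') * B) + ‖Qstar‖ := by
          refine add_le_add (add_le_add ?_ ?_) h3
          · rw [abs_mul, abs_of_nonneg ht0]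
            exact mul_le_mul_of_nonneg_left h1 ht0
          · rw [abs_mul, abs_of_nonneg (by linarith)]
            exact mul_le_mul_of_nonneg_left h2 (by linarith)
      _ = M := by ring
  have hM0 : 0 ≤ M := le_trans (abs_nonneg _) (hfbound (Classical.arbitrary X))
  -- variance ≤ M^2
  have hvar : (∑ x' : X, p x' * (f x') ^ 2) - (∑ x' : X, p x' * f x') ^ 2 ≤ M ^ 2 := by
    have h1 : (∑ x' : X, p x' * (f x') ^ 2) ≤ M ^ 2 := by
      calc (∑ x' : X, p x' * (f x') ^ 2) ≤ ∑ x' : X, p x' * M ^ 2 := by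
            refine Finset.sum_le_sum fun x' _ => mul_le_mul_of_nonneg_left ?_ (hp0 x')
            have := hfbound x'
            calc (f x') ^ 2 = |f x'| ^ 2 := (sq_abs _).symm
              _ ≤ M ^ 2 := pow_le_pow_left₀ (abs_nonneg _) this 2
        _ = M ^ 2 := by rw [← Finset.sum_mul, hp1, one_mul]
    nlinarith [sq_nonneg (∑ x' : X, p x' * f x')]
  refine hvar.trans ?_
  rw [← mul_pow]
  refine pow_le_pow_left₀ hM0 ?_ 2
  have : (C_R + (1 + lam) * ‖Qstar‖ + lam) * (1 + D)
      = C_R + (1 + lam) * ‖Qstar‖ + lam + (C_R + (1 + lam) * ‖Qstar‖ + lam) * D := by ring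
  rw [this]
  have hMexp : M = C_R + (1 + lam) * ‖Qstar‖ + lam * D := by rw [hM, hB]; ring
  nlinarith [mul_nonneg hD0 (by positivity : (0:ℝ) ≤ C_R + (1 + lam) * ‖Qstar‖)]
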